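/- arXiv:2310.06333 — 6 statements merged into one kernel-verified Lean document; each statement's English description precedes it below -/
import Mathlib

section
/- Let (X,Y) be jointly distributed random variables on finite alphabets and fix a pair of values (x,y) with P_x > 0 and P_y > 0. Then: (1) f(Δ_{xy}, P_x·P_y) ≤ 1; and (2) if Δ_{xy} ≠ 0, then min(P_x, P_y, |Δ_{xy}|) ≥ (1/2)·f(Δ_{xy}, P_x·P_y) / log(6 / f(Δ_{xy}, P_x·P_y)). -/
open scoped BigOperators

noncomputable section

/-- Marginal of the first coordinate of a joint pmf. -/
noncomputable def margFst {α β : Type*} [Fintype β] (p : α × β → ℝ) (x : α) : ℝ :=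
  ∑ y, p (x, y)

/-- Marginal of the second coordinate of a joint pmf. -/
noncomputable def margSnd {α β : Type*} [Fintype α] (p : α × β → ℝ) (y : β) : ℝ :=
  ∑ x, p (x, y)

/-- Mutual information `I(X;Y)` of a joint pmf on `α × β` (natural logarithm;
summands with zero probability vanish since `Real.log 0 = 0` and `x / 0 = 0`). -/
noncomputable def mutInfo {α β : Type*} [Fintype α] [Fintype β] (p : α × β → ℝ) : ℝ :=
  ∑ x, ∑ y, p (x, y) * Real.log (p (x, y) / (margFst p x * margSnd p y))

/-- Conditional mutual information `I(X;Y∣Z)` of a joint pmf on `α × β × γ`. -/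
noncomputable def condMutInfo {α β γ : Type*} [Fintype α] [Fintype β] [Fintype γ]
    (p : α × β × γ → ℝ) : ℝ :=
  ∑ x, ∑ y, ∑ z, p (x, y, z) *
    Real.log (p (x, y, z) * (∑ x', ∑ y', p (x', y', z)) /
      ((∑ y', p (x, y', z)) * (∑ x', p (x', y, z))))

/-- `f(a,b) = (a+b)·log((a+b)/b) − a`. -/
noncomputable def fKL (a b : ℝ) : ℝ := (a + b) * Real.log ((a + b) / b) - a

lemma fKL_eq (P c : ℝ) : fKL (P - c) c = P * Real.log (P / c) - (P - c) := by
  simp [fKL]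

lemma fKL_pos {P c : ℝ} (hP : 0 ≤ P) (hc : 0 < c) (hne : P ≠ c) :
    0 < fKL (P - c) c := by
  rw [fKL_eq]
  rcases eq_or_lt_of_le hP with h0 | h0
  · simp [← h0]; linarith
  · have hlog : Real.log (c / P) < c / P - 1 :=
      Real.log_lt_sub_one_of_pos (div_pos hc h0) (by
        intro h
        apply hne
        field_simp at h
        linarith)
    have h2 : Real.log (P / c) = - Real.log (c / P) := by
      rw [← Real.log_inv]
      congr 1
      field_simp
    have h3 := mul_lt_mul_of_pos_left hlog h0
    rw [mul_sub] at h3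
    rw [h2]
    have : P * (c / P) = c := by field_simp
    nlinarith

lemma fKL_le_one {P c : ℝ} (hP : 0 ≤ P) (hc : 0 < c) (hc1 : c ≤ 1) (hP2 : P * P ≤ c) :
    fKL (P - c) c ≤ 1 := by
  rw [fKL_eq]
  rcases le_or_gt P c with h | h
  · have hlog : Real.log (P / c) ≤ 0 :=
      Real.log_nonpos (by positivity) ((div_le_one hc).mpr h)
    nlinarith [mul_nonneg hP (neg_nonneg.mpr hlog)]
  · have hP0 : 0 < P := hc.trans h
    have h1 : Real.log (P / c) = Real.log P - Real.log c :=
      Real.log_div (ne_of_gt hP0) (ne_of_gt hc)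
    have h2 : 2 * Real.log P ≤ Real.log c := by
      have := Real.log_le_log (by positivity) hP2
      rwa [Real.log_mul hP0.ne' hP0.ne', ← two_mul] at this
    have h3 : Real.log P⁻¹ ≤ P⁻¹ - 1 := Real.log_le_sub_one_of_pos (by positivity)
    rw [Real.log_inv] at h3
    have h3' := mul_le_mul_of_nonneg_left h3 hP0.le
    have hPinv : P * (P⁻¹ - 1) = 1 - P := by field_simp
    rw [hPinv] at h3'
    have h4 : P * (Real.log c - 2 * Real.log P) ≥ 0 :=
      mul_nonneg hP0.le (by linarith)
    rw [h1]
    nlinarith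

lemma log_le_two_sqrt {x : ℝ} (hx : 0 < x) : Real.log x ≤ 2 * Real.sqrt x := by
  have h1 : Real.log (Real.sqrt x) ≤ Real.sqrt x - 1 :=
    Real.log_le_sub_one_of_pos (Real.sqrt_pos.mpr hx)
  have h2 : Real.log (Real.sqrt x) = Real.log x / 2 := Real.log_sqrt hx.le
  nlinarith [Real.sqrt_nonneg x]

lemma key_pos {P c : ℝ} (hc : 0 < c) (h : c < P) (hP2 : P * P ≤ c)
    (hf1 : fKL (P - c) c ≤ 1) :
    1 / 2 * fKL (P - c) c / Real.log (6 / fKL (P - c) c) ≤ P - c := by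
  set f := fKL (P - c) c with hf
  have hP0 : 0 < P := hc.trans h
  have hfpos : 0 < f := fKL_pos hP0.le hc (ne_of_gt h)
  have hpc1 : (1:ℝ) < P / c := (one_lt_div hc).mpr h
  have hL0 : 0 < Real.log (P / c) := Real.log_pos hpc1
  set L := Real.log (P / c) with hLdef
  -- f ≤ (P - c) * L
  have hcL : c * L ≤ P - c := by
    have := Real.log_le_sub_one_of_pos (show (0:ℝ) < P / c by positivity)
    have h2 := mul_le_mul_of_nonneg_left this hc.le
    have : c * (P / c - 1) = P - c := by field_simp
    linarith [h2.trans_eq this]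
  have hfle : f ≤ (P - c) * L := by
    rw [hf, fKL_eq]
    nlinarith
  -- L^2 ≤ 4 * (P / c)
  have hLsq : L ^ 2 ≤ 4 * (P / c) := by
    have := log_le_two_sqrt (show (0:ℝ) < P / c by positivity)
    have hs : Real.sqrt (P / c) ^ 2 = P / c := Real.sq_sqrt (by positivity)
    nlinarith [Real.sqrt_nonneg (P / c), hL0]
  -- f ^ 2 * P ≤ 36 * c
  have hPc : (P - c) ^ 2 ≤ c := by nlinarith
  have hstep : f ^ 2 * P ≤ 36 * c := by
    have h1 : f ^ 2 ≤ (P - c) ^ 2 * L ^ 2 := by nlinarith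
    have h2 : f ^ 2 * P ≤ (P - c) ^ 2 * L ^ 2 * P := by nlinarith
    have h3 : (P - c) ^ 2 * L ^ 2 * P ≤ (P - c) ^ 2 * (4 * (P / c)) * P := by
      have hA : (0:ℝ) ≤ (P - c) ^ 2 * P := by positivity
      nlinarith [mul_le_mul_of_nonneg_left hLsq hA]
    have h4 : (P - c) ^ 2 * (4 * (P / c)) * P = 4 * (P - c) ^ 2 * (P * P) / c := by
      field_simp
    have h5 : 4 * (P - c) ^ 2 * (P * P) / c ≤ 4 * (P - c) ^ 2 := by
      rw [div_le_iff₀ hc]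
      nlinarith [sq_nonneg (P - c)]
    nlinarith
  -- L ≤ 2 * log (6 / f)
  have hL2 : L ≤ 2 * Real.log (6 / f) := by
    have hq : P / c ≤ (6 / f) ^ 2 := by
      rw [div_pow, le_div_iff₀ (by positivity), div_mul_eq_mul_div, div_le_iff₀ hc]
      nlinarith
    calc L ≤ Real.log ((6 / f) ^ 2) := Real.log_le_log (by positivity) hq
      _ = 2 * Real.log (6 / f) := by
          rw [Real.log_pow]; push_cast; ring
  have hlog6 : 0 < Real.log (6 / f) := Real.log_pos (by
    rw [lt_div_iff₀ hfpos]; linarith)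
  rw [div_le_iff₀ hlog6]
  nlinarith

lemma key_neg {P c : ℝ} (hP : 0 ≤ P) (hc : 0 < c) (h : P < c)
    (hf1 : fKL (P - c) c ≤ 1) :
    1 / 2 * fKL (P - c) c / Real.log (6 / fKL (P - c) c) ≤ c - P := by
  set f := fKL (P - c) c with hf
  have hfpos : 0 < f := fKL_pos hP hc (ne_of_lt h)
  have hfle : f ≤ c - P := by
    have hlog : Real.log (P / c) ≤ 0 :=
      Real.log_nonpos (by positivity) ((div_le_one hc).mpr h.le)
    have := mul_nonpos_of_nonneg_of_nonpos hP hlog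
    rw [hf, fKL_eq]; linarith
  have hlog1 : 1 ≤ Real.log (6 / f) := by
    rw [Real.le_log_iff_exp_le (by positivity)]
    have he : Real.exp 1 < 2.7182818286 := Real.exp_one_lt_d9
    have : (6:ℝ) ≤ 6 / f := by
      rw [le_div_iff₀ hfpos]; nlinarith
    linarith
  have : 1 / 2 * f / Real.log (6 / f) ≤ 1 / 2 * f :=
    div_le_self (by positivity) hlog1
  linarith

/-- Properties of `f(Δ_{xy}, P_x·P_y)`:
(1) it is at most `1`; and (2) if `Δ_{xy} ≠ 0` then
`min(P_x, P_y, |Δ_{xy}|) ≥ (1/2)·f / log(6/f)`. -/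
theorem f_properties {A B : Type*} [Fintype A] [Fintype B]
    (p : A × B → ℝ) (hp : ∀ w, 0 ≤ p w) (hsum : (∑ w, p w) = 1)
    (x : A) (y : B) (hx : 0 < margFst p x) (hy : 0 < margSnd p y) :
    fKL (p (x, y) - margFst p x * margSnd p y) (margFst p x * margSnd p y) ≤ 1 ∧
    (p (x, y) - margFst p x * margSnd p y ≠ 0 →
      (1 / 2) *
          fKL (p (x, y) - margFst p x * margSnd p y) (margFst p x * margSnd p y) /
          Real.log (6 /
            fKL (p (x, y) - margFst p x * margSnd p y) (margFst p x * margSnd p y)) ≤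
        min (margFst p x)
          (min (margSnd p y) |p (x, y) - margFst p x * margSnd p y|)) := by
  set P := p (x, y) with hPdef
  set a := margFst p x with hadef
  set b := margSnd p y with hbdef
  have hP : 0 ≤ P := hp (x, y)
  have hPa : P ≤ a := by
    rw [hadef, margFst]
    exact Finset.single_le_sum (fun i _ => hp (x, i)) (Finset.mem_univ y)
  have hPb : P ≤ b := by
    rw [hbdef, margSnd]
    exact Finset.single_le_sum (fun i _ => hp (i, y)) (Finset.mem_univ x)
  have htot : (∑ x' : A, ∑ y' : B, p (x', y')) = 1 := by
    rw [← Fintype.sum_prod_type]; exact hsum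
  have ha1 : a ≤ 1 := by
    rw [← htot, hadef, margFst]
    exact Finset.single_le_sum
      (fun i _ => Finset.sum_nonneg fun j _ => hp (i, j)) (Finset.mem_univ x)
  have hb1 : b ≤ 1 := by
    rw [hbdef, margSnd]
    calc (∑ x' : A, p (x', y)) ≤ ∑ x' : A, ∑ y' : B, p (x', y') :=
          Finset.sum_le_sum fun i _ =>
            Finset.single_le_sum (fun j _ => hp (i, j)) (Finset.mem_univ y)
      _ = 1 := htot
  set c := a * b with hcdef
  have hc : 0 < c := mul_pos hx hy
  have hc1 : c ≤ 1 := by nlinarith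
  have hP2 : P * P ≤ c := mul_le_mul hPa hPb hP (le_of_lt hx)
  have hf1 : fKL (P - c) c ≤ 1 := fKL_le_one hP hc hc1 hP2
  refine ⟨hf1, fun hne => ?_⟩
  have hne' : P ≠ c := fun h => hne (by rw [h]; ring)
  rcases lt_or_gt_of_ne hne' with hlt | hgt
  · -- P < c : |Δ| = c - P ≤ c ≤ min a b
    have habs : |P - c| = c - P := by rw [abs_of_nonpos (by linarith)]; ring
    have hkey := key_neg hP hc hlt hf1
    have hDa : c - P ≤ a := by nlinarith
    have hDb : c - P ≤ b := by nlinarith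
    rw [habs]
    exact le_min (hkey.trans hDa) (le_min (hkey.trans hDb) hkey)
  · -- c < P : Δ = P - c ≤ P ≤ min a b
    have habs : |P - c| = P - c := abs_of_pos (by linarith)
    have hkey := key_pos hc hgt hP2 hf1
    have hDa : P - c ≤ a := by linarith [hc.le, hPa]
    have hDb : P - c ≤ b := by linarith [hc.le, hPb]
    rw [habs]
    exact le_min (hkey.trans hDa) (le_min (hkey.trans hDb) hkey)
end
end

section
/- Let (X,Y) be jointly distributed random variables on finite alphabets, fix a pair of values (x,y) with marginal probabilities P_x, P_y, let N > 1 be an integer and δ ∈ (0,1). Then with probability at least 1−3δ over N i.i.d. samples of (X,Y), the empirical marginal frequencies satisfy |P̂_x·P̂_y − P_x·P_y| ≤ 6·√(P_x·P_y·log(2/δ)/N) + 18·(P_x + P_y)·log(2/δ)/N + 18·log²(2/δ)/N². -/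
open scoped BigOperators

noncomputable section

open Classical in
/-- Probability that `N` i.i.d. samples from the pmf `p` satisfy the event `E`. -/
noncomputable def iidProb {α : Type*} [Fintype α] (p : α → ℝ) (N : ℕ)
    (E : (Fin N → α) → Prop) : ℝ :=
  ∑ s : Fin N → α, if E s then ∏ i, p (s i) else 0

open Classical in
/-- Empirical frequency (relative frequency) of the outcome `a` among the samples `s`. -/
noncomputable def empFreq {α : Type*} [Fintype α] {N : ℕ} (s : Fin N → α) (a : α) : ℝ :=
  ((Finset.univ.filter fun i => s i = a).card : ℝ) / N

section Aux
open Classical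

/-- Number of samples satisfying a predicate. -/
noncomputable def countP {α : Type*} [Fintype α] {N : ℕ} (φ : α → Prop) (s : Fin N → α) : ℕ :=
  (Finset.univ.filter fun i => φ (s i)).card

variable {α : Type*} [Fintype α] {p : α → ℝ} {N : ℕ}

lemma sum_prod_pow (f : α → ℝ) :
    ∑ s : Fin N → α, ∏ i, f (s i) = (∑ a, f a) ^ N := by
  rw [← Fin.prod_const N (∑ a, f a), Finset.prod_univ_sum]; rfl

lemma iidProb_mono {E F : (Fin N → α) → Prop} (hp : ∀ a, 0 ≤ p a)
    (h : ∀ s, E s → F s) : iidProb p N E ≤ iidProb p N F := by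
  refine Finset.sum_le_sum fun s _ => ?_
  by_cases hE : E s
  · simp [hE, h s hE]
  · simp only [hE, if_false]
    split
    · exact Finset.prod_nonneg fun i _ => hp _
    · exact le_refl 0

lemma iidProb_union {E F : (Fin N → α) → Prop} (hp : ∀ a, 0 ≤ p a) :
    iidProb p N (fun s => E s ∨ F s) ≤ iidProb p N E + iidProb p N F := by
  unfold iidProb
  rw [← Finset.sum_add_distrib]
  refine Finset.sum_le_sum fun s _ => ?_
  have h0 : (0:ℝ) ≤ ∏ i, p (s i) := Finset.prod_nonneg fun i _ => hp _
  by_cases hE : E s <;> by_cases hF : F s <;> simp [hE, hF] <;> linarith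

lemma iidProb_compl (E : (Fin N → α) → Prop) (hp : ∀ a, 0 ≤ p a)
    (hsum : ∑ a, p a = 1) :
    iidProb p N E = 1 - iidProb p N (fun s => ¬ E s) := by
  have h : iidProb p N E + iidProb p N (fun s => ¬ E s) = 1 := by
    unfold iidProb
    rw [← Finset.sum_add_distrib]
    refine Eq.trans (Finset.sum_congr rfl fun s _ => ?_)
      (by rw [sum_prod_pow, hsum, one_pow] :
        ∑ s : Fin N → α, ∏ i, p (s i) = 1)
    by_cases hE : E s <;> simp [hE]
  linarith

lemma mgf_eq (φ : α → Prop) (c : ℝ) :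
    ∑ s : Fin N → α, (∏ i, p (s i)) * Real.exp (c * (countP φ s : ℝ))
      = (∑ a, p a * if φ a then Real.exp c else 1) ^ N := by
  rw [← sum_prod_pow]
  refine Finset.sum_congr rfl fun s _ => ?_
  have h1 : Real.exp (c * (countP φ s : ℝ)) = ∏ i, if φ (s i) then Real.exp c else 1 := by
    rw [Finset.prod_ite, Finset.prod_const, Finset.prod_const, one_pow, mul_one,
      mul_comm c, Real.exp_nat_mul]
    rfl
  rw [h1, ← Finset.prod_mul_distrib]

lemma chernoff (φ : α → Prop) (hp : ∀ a, 0 ≤ p a) (c r : ℝ)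
    (E : (Fin N → α) → Prop)
    (hE : ∀ s, E s → c * r ≤ c * (countP φ s : ℝ)) :
    iidProb p N E ≤ Real.exp (-(c * r)) * (∑ a, p a * if φ a then Real.exp c else 1) ^ N := by
  rw [← mgf_eq, Finset.mul_sum]
  refine Finset.sum_le_sum fun s _ => ?_
  have h0 : (0:ℝ) ≤ ∏ i, p (s i) := Finset.prod_nonneg fun i _ => hp _
  by_cases hEs : E s
  · simp only [hEs, if_true]
    have h1 : (1:ℝ) ≤ Real.exp (-(c * r)) * Real.exp (c * (countP φ s : ℝ)) := by
      rw [← Real.exp_add]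
      nlinarith [hE s hEs, Real.add_one_le_exp (-(c * r) + c * (countP φ s : ℝ))]
    nlinarith
  · simp only [hEs, if_false]
    positivity

lemma exp_quad_bound {c : ℝ} (h1 : |c| ≤ 1) : Real.exp c ≤ 1 + c + c ^ 2 := by
  have h := Real.exp_bound h1 (n := 2) (by norm_num)
  have h2 : ∑ m ∈ Finset.range 2, c ^ m / (m.factorial : ℝ) = 1 + c := by
    simp [Finset.sum_range_succ]
  rw [h2] at h
  norm_num [Nat.factorial] at h
  have := abs_le.mp h
  nlinarith [sq_abs c]

lemma base_bound (q c : ℝ) (hq0 : 0 ≤ q) (hc : |c| ≤ 1) :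
    q * Real.exp c + (1 - q) ≤ Real.exp (q * (c + c ^ 2)) := by
  have h1 := exp_quad_bound hc
  have h2 := Real.add_one_le_exp (q * (c + c ^ 2))
  nlinarith

lemma lambda_choice (q L : ℝ) (N : ℕ) (hq0 : 0 ≤ q) (hL : 0 < L) :
    ∃ l : ℝ, 0 ≤ l ∧ l ≤ 1 ∧
      (N : ℝ) * q * l ^ 2 - l * (3 * Real.sqrt ((N : ℝ) * q * L) + 3 * L) ≤ -L := by
  set M := (N : ℝ) * q with hM
  have hM0 : 0 ≤ M := by positivity
  by_cases hcase : M ≤ L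
  · refine ⟨1, by norm_num, by norm_num, ?_⟩
    have hs : 0 ≤ Real.sqrt (M * L) := Real.sqrt_nonneg _
    nlinarith
  · push_neg at hcase
    have hMpos : 0 < M := lt_trans hL hcase
    refine ⟨Real.sqrt (L / M), Real.sqrt_nonneg _, ?_, ?_⟩
    · rw [show (1:ℝ) = Real.sqrt 1 by simp]
      exact Real.sqrt_le_sqrt (by rw [div_le_one hMpos]; linarith)
    · have h1 : Real.sqrt (L / M) ^ 2 = L / M := Real.sq_sqrt (by positivity)
      have h2 : Real.sqrt (L / M) * Real.sqrt (M * L) = L := by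
        rw [← Real.sqrt_mul (by positivity)]
        rw [show L / M * (M * L) = L ^ 2 by field_simp]
        exact Real.sqrt_sq hL.le
      have h3 : M * Real.sqrt (L / M) ^ 2 = L := by rw [h1]; field_simp
      have h4 : 0 ≤ Real.sqrt (L / M) := Real.sqrt_nonneg _
      nlinarith

lemma base_eq (φ : α → Prop) (hsum : ∑ a, p a = 1) (c : ℝ) :
    ∑ a, p a * (if φ a then Real.exp c else 1)
      = (∑ a ∈ Finset.univ.filter φ, p a) * Real.exp c
        + (1 - ∑ a ∈ Finset.univ.filter φ, p a) := by
  have h := Finset.sum_filter_add_sum_filter_not Finset.univ φ p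
  rw [hsum] at h
  simp only [mul_ite, mul_one]
  rw [Finset.sum_ite]
  rw [← Finset.sum_mul]
  linarith

lemma marginal_tail (φ : α → Prop) (hp : ∀ a, 0 ≤ p a) (hsum : ∑ a, p a = 1)
    (L : ℝ) (hL : 0 < L) (q : ℝ) (hqdef : q = ∑ a ∈ Finset.univ.filter φ, p a) :
    iidProb p N (fun s =>
        3 * Real.sqrt ((N:ℝ) * q * L) + 3 * L
        < |(countP φ s : ℝ) - (N:ℝ) * q|)
      ≤ 2 * Real.exp (-L) := by
  have hq0 : 0 ≤ q := hqdef ▸ Finset.sum_nonneg fun a _ => hp a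
  have hq1 : q ≤ 1 := by
    rw [hqdef, ← hsum]
    exact Finset.sum_le_sum_of_subset_of_nonneg (Finset.filter_subset _ _)
      (fun a _ _ => hp a)
  set t : ℝ := 3 * Real.sqrt ((N:ℝ) * q * L) + 3 * L with ht
  have ht0 : 0 < t := by positivity
  obtain ⟨l, hl0, hl1, hlkey⟩ := lambda_choice q L N hq0 hL
  have habs : |l| ≤ 1 := abs_le.mpr ⟨by linarith, hl1⟩
  have habs' : |(-l)| ≤ 1 := by rwa [abs_neg]
  have hup : iidProb p N (fun s => (N:ℝ) * q + t ≤ (countP φ s : ℝ)) ≤ Real.exp (-L) := by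
    have h1 := chernoff (N := N) φ hp l ((N:ℝ) * q + t)
      (fun s => (N:ℝ) * q + t ≤ (countP φ s : ℝ))
      (fun s hs => mul_le_mul_of_nonneg_left hs hl0)
    refine h1.trans ?_
    rw [base_eq φ hsum, ← hqdef]
    have h2 : (q * Real.exp l + (1 - q)) ^ N ≤ Real.exp (q * (l + l ^ 2)) ^ N := by
      refine pow_le_pow_left₀ ?_ (base_bound q l hq0 habs) N
      nlinarith [Real.exp_pos l]
    calc Real.exp (-(l * ((N:ℝ) * q + t))) * (q * Real.exp l + (1 - q)) ^ N
        ≤ Real.exp (-(l * ((N:ℝ) * q + t))) * Real.exp (q * (l + l ^ 2)) ^ N :=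
          mul_le_mul_of_nonneg_left h2 (Real.exp_pos _).le
      _ = Real.exp (-(l * ((N:ℝ) * q + t)) + N * (q * (l + l ^ 2))) := by
          rw [← Real.exp_nat_mul, ← Real.exp_add]
      _ ≤ Real.exp (-L) := by
          apply Real.exp_le_exp.mpr
          nlinarith
  have hlow : iidProb p N (fun s => (countP φ s : ℝ) ≤ (N:ℝ) * q - t) ≤ Real.exp (-L) := by
    have h1 := chernoff (N := N) φ hp (-l) ((N:ℝ) * q - t)
      (fun s => (countP φ s : ℝ) ≤ (N:ℝ) * q - t)
      (fun s hs => mul_le_mul_of_nonpos_left hs (by linarith))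
    refine h1.trans ?_
    rw [base_eq φ hsum, ← hqdef]
    have h2 : (q * Real.exp (-l) + (1 - q)) ^ N ≤ Real.exp (q * (-l + (-l) ^ 2)) ^ N := by
      refine pow_le_pow_left₀ ?_ (base_bound q (-l) hq0 habs') N
      nlinarith [Real.exp_pos (-l)]
    calc Real.exp (-(-l * ((N:ℝ) * q - t))) * (q * Real.exp (-l) + (1 - q)) ^ N
        ≤ Real.exp (-(-l * ((N:ℝ) * q - t))) * Real.exp (q * (-l + (-l) ^ 2)) ^ N :=
          mul_le_mul_of_nonneg_left h2 (Real.exp_pos _).le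
      _ = Real.exp (-(-l * ((N:ℝ) * q - t)) + N * (q * (-l + (-l) ^ 2))) := by
          rw [← Real.exp_nat_mul, ← Real.exp_add]
      _ ≤ Real.exp (-L) := by
          apply Real.exp_le_exp.mpr
          nlinarith
  have hmono : ∀ s : Fin N → α, (t < |(countP φ s : ℝ) - (N:ℝ) * q|) →
      ((N:ℝ) * q + t ≤ (countP φ s : ℝ) ∨ (countP φ s : ℝ) ≤ (N:ℝ) * q - t) := by
    intro s hs
    rcases lt_abs.mp hs with h | h
    · left; linarith
    · right; linarith
  calc iidProb p N _ ≤ iidProb p N (fun s =>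
        (N:ℝ) * q + t ≤ (countP φ s : ℝ) ∨ (countP φ s : ℝ) ≤ (N:ℝ) * q - t) :=
        iidProb_mono hp hmono
    _ ≤ _ + _ := iidProb_union hp
    _ ≤ 2 * Real.exp (-L) := by linarith

end Aux

section Bridge
open Classical

variable {A B : Type*} [Fintype A] [Fintype B] {N : ℕ}

lemma margFst_empFreq (s : Fin N → A × B) (x : A) :
    margFst (empFreq s) x = (countP (fun w => w.1 = x) s : ℝ) / N := by
  unfold margFst empFreq countP
  rw [← Finset.sum_div]
  congr 1
  rw [← Nat.cast_sum]
  congr 1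
  simp only [Finset.card_filter]
  rw [Finset.sum_comm]
  refine Finset.sum_congr rfl fun i _ => ?_
  by_cases h : (s i).1 = x
  · simp only [Prod.ext_iff, h, true_and]
    rw [Finset.sum_ite_eq Finset.univ (s i).2 (fun _ => 1)]
    simp
  · simp [Prod.ext_iff, h]

lemma margSnd_empFreq (s : Fin N → A × B) (y : B) :
    margSnd (empFreq s) y = (countP (fun w => w.2 = y) s : ℝ) / N := by
  unfold margSnd empFreq countP
  rw [← Finset.sum_div]
  congr 1
  rw [← Nat.cast_sum]
  congr 1
  simp only [Finset.card_filter]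
  rw [Finset.sum_comm]
  refine Finset.sum_congr rfl fun i _ => ?_
  by_cases h : (s i).2 = y
  · simp only [Prod.ext_iff, h, and_true]
    rw [Finset.sum_ite_eq Finset.univ (s i).1 (fun _ => 1)]
    simp
  · simp [Prod.ext_iff, h]

lemma margFst_filter (p : A × B → ℝ) (x : A) :
    margFst p x = ∑ w ∈ Finset.univ.filter (fun w : A × B => w.1 = x), p w := by
  rw [Finset.sum_filter, Fintype.sum_prod_type]
  unfold margFst
  rw [Fintype.sum_eq_single x fun a ha => ?_]
  · simp
  · simp [ha]

lemma margSnd_filter (p : A × B → ℝ) (y : B) :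
    margSnd p y = ∑ w ∈ Finset.univ.filter (fun w : A × B => w.2 = y), p w := by
  rw [Finset.sum_filter, Fintype.sum_prod_type_right]
  unfold margSnd
  rw [Fintype.sum_eq_single y fun b hb => ?_]
  · simp
  · simp [hb]

set_option maxHeartbeats 1000000 in
lemma det_bound (Px Py phx phy u : ℝ)
    (hPx0 : 0 ≤ Px) (hPx1 : Px ≤ 1) (hPy0 : 0 ≤ Py) (hPy1 : Py ≤ 1) (hu : 0 < u)
    (hx : |phx - Px| ≤ 3 * Real.sqrt (Px * u) + 3 * u)
    (hy : |phy - Py| ≤ 3 * Real.sqrt (Py * u) + 3 * u) :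
    |phx * phy - Px * Py| ≤ 6 * Real.sqrt (Px * Py * u) + 18 * (Px + Py) * u + 18 * u ^ 2 := by
  set a := Real.sqrt (Px * u) with ha
  set b := Real.sqrt (Py * u) with hb
  set c := Real.sqrt (Px * Py * u) with hc
  clear_value a b c
  have ha0 : 0 ≤ a := by rw [ha]; exact Real.sqrt_nonneg _
  have hb0 : 0 ≤ b := by rw [hb]; exact Real.sqrt_nonneg _
  have hc0 : 0 ≤ c := by rw [hc]; exact Real.sqrt_nonneg _
  have ha2 : a ^ 2 = Px * u := by rw [ha]; exact Real.sq_sqrt (by positivity)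
  have hb2 : b ^ 2 = Py * u := by rw [hb]; exact Real.sq_sqrt (by positivity)
  have hc2 : c ^ 2 = Px * Py * u := by rw [hc]; exact Real.sq_sqrt (by positivity)
  have hdx : |phx - Px| * |phy - Py| ≤ (3 * a + 3 * u) * (3 * b + 3 * u) := by
    have := abs_nonneg (phx - Px)
    have := abs_nonneg (phy - Py)
    nlinarith
  have key : |phx * phy - Px * Py| ≤ Px * |phy - Py| + Py * |phx - Px| + |phx - Px| * |phy - Py| := by
    have hid : phx * phy - Px * Py = Px * (phy - Py) + Py * (phx - Px) + (phx - Px) * (phy - Py) := by ring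
    calc |phx * phy - Px * Py| ≤ |Px * (phy - Py) + Py * (phx - Px)| + |(phx - Px) * (phy - Py)| := by
          rw [hid]; exact abs_add_le _ _
      _ ≤ |Px * (phy - Py)| + |Py * (phx - Px)| + |(phx - Px) * (phy - Py)| := by
          have := abs_add_le (Px * (phy - Py)) (Py * (phx - Px)); linarith
      _ = Px * |phy - Py| + Py * |phx - Px| + |phx - Px| * |phy - Py| := by
          rw [abs_mul, abs_mul, abs_mul, abs_of_nonneg hPx0, abs_of_nonneg hPy0]
  have h1 : Px * b ≤ c := by
    have he : Px * b = Real.sqrt (Px ^ 2 * (Py * u)) := by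
      rw [Real.sqrt_mul (sq_nonneg Px), Real.sqrt_sq hPx0, hb]
    rw [he, hc]
    exact Real.sqrt_le_sqrt (by nlinarith [mul_nonneg (mul_nonneg hPx0 hPy0) hu.le])
  have h2 : Py * a ≤ c := by
    have he : Py * a = Real.sqrt (Py ^ 2 * (Px * u)) := by
      rw [Real.sqrt_mul (sq_nonneg Py), Real.sqrt_sq hPy0, ha]
    rw [he, hc]
    exact Real.sqrt_le_sqrt (by nlinarith [mul_nonneg (mul_nonneg hPx0 hPy0) hu.le])
  have h3 : a * b ≤ (Px + Py) / 2 * u := by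
    have he : a * b = Real.sqrt (Px * u * (Py * u)) := by
      rw [ha, hb, ← Real.sqrt_mul (by positivity)]
    rw [he, show (Px + Py) / 2 * u = Real.sqrt (((Px + Py) / 2 * u) ^ 2) from
      (Real.sqrt_sq (by positivity)).symm]
    exact Real.sqrt_le_sqrt (by nlinarith [mul_nonneg (sq_nonneg (Px - Py)) (sq_nonneg u)])
  have h4 : a * u ≤ (a ^ 2 + u ^ 2) / 2 := by nlinarith [sq_nonneg (a - u)]
  have h5 : b * u ≤ (b ^ 2 + u ^ 2) / 2 := by nlinarith [sq_nonneg (b - u)]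
  have e1 : Px * |phy - Py| ≤ 3 * c + 3 * (Px * u) := by
    have := mul_le_mul_of_nonneg_left hy hPx0
    nlinarith
  have e2 : Py * |phx - Px| ≤ 3 * c + 3 * (Py * u) := by
    have := mul_le_mul_of_nonneg_left hx hPy0
    nlinarith
  have e3 : |phx - Px| * |phy - Py| ≤ 9 * (a * b) + 9 * (a * u) + 9 * (b * u) + 9 * u ^ 2 :=
    hdx.trans_eq (by ring)
  have e4 : 0 ≤ (Px + Py) * u := mul_nonneg (add_nonneg hPx0 hPy0) hu.le
  have e5 : 0 ≤ Px * u := mul_nonneg hPx0 hu.le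
  have e6 : 0 ≤ Py * u := mul_nonneg hPy0 hu.le
  linarith [key, e1, e2, e3, h3, h4, h5, ha2, hb2, e4, e5, e6]

end Bridge

/-- With probability at least `1 − 3δ`, the product of empirical marginal frequencies satisfies
`|P̂_x·P̂_y − P_x·P_y| ≤ 6√(P_x P_y log(2/δ)/N) + 18(P_x+P_y)log(2/δ)/N + 18 log²(2/δ)/N²`. -/



theorem empirical_product_concentration {A B : Type*} [Fintype A] [Fintype B]
    (p : A × B → ℝ) (hp : ∀ w, 0 ≤ p w) (hsum : (∑ w, p w) = 1)
    (x : A) (y : B) (N : ℕ) (hN : 1 < N) (δ : ℝ) (hδ0 : 0 < δ) (hδ1 : δ < 1) :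
    1 - 3 * δ ≤ iidProb p N (fun s =>
      |margFst (empFreq s) x * margSnd (empFreq s) y - margFst p x * margSnd p y| ≤
        6 * Real.sqrt (margFst p x * margSnd p y * Real.log (2 / δ) / N) +
          18 * (margFst p x + margSnd p y) * Real.log (2 / δ) / N +
          18 * Real.log (2 / δ) ^ 2 / (N : ℝ) ^ 2) := by
  classical
  set L := Real.log (2 / δ) with hLdef
  have hL : 0 < L := Real.log_pos (by rw [lt_div_iff₀ hδ0]; linarith)
  have hN0 : (0:ℝ) < N := by
    have : 0 < N := lt_trans Nat.zero_lt_one hN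
    exact_mod_cast this
  have hu : 0 < L / N := div_pos hL hN0
  have hqx := margFst_filter p x
  have hqy := margSnd_filter p y
  have hPx0 : 0 ≤ margFst p x := Finset.sum_nonneg fun a _ => hp _
  have hPy0 : 0 ≤ margSnd p y := Finset.sum_nonneg fun a _ => hp _
  have hPx1 : margFst p x ≤ 1 := by
    rw [hqx, ← hsum]
    exact Finset.sum_le_sum_of_subset_of_nonneg (Finset.filter_subset _ _)
      fun a _ _ => hp a
  have hPy1 : margSnd p y ≤ 1 := by
    rw [hqy, ← hsum]
    exact Finset.sum_le_sum_of_subset_of_nonneg (Finset.filter_subset _ _)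
      fun a _ _ => hp a
  have htailx := marginal_tail (N := N) (fun w : A × B => w.1 = x) hp hsum L hL
    (margFst p x) hqx
  have htaily := marginal_tail (N := N) (fun w : A × B => w.2 = y) hp hsum L hL
    (margSnd p y) hqy
  have hexp : Real.exp (-L) = δ / 2 := by
    rw [hLdef, Real.exp_neg, Real.exp_log (by positivity), inv_div]
  rw [iidProb_compl _ hp hsum]
  have himp : ∀ s : Fin N → A × B,
      ¬ (|margFst (empFreq s) x * margSnd (empFreq s) y - margFst p x * margSnd p y| ≤
        6 * Real.sqrt (margFst p x * margSnd p y * L / N) +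
          18 * (margFst p x + margSnd p y) * L / N +
          18 * L ^ 2 / (N : ℝ) ^ 2) →
      ((3 * Real.sqrt ((N:ℝ) * margFst p x * L) + 3 * L
          < |(countP (fun w : A × B => w.1 = x) s : ℝ) - (N:ℝ) * margFst p x|) ∨
       (3 * Real.sqrt ((N:ℝ) * margSnd p y * L) + 3 * L
          < |(countP (fun w : A × B => w.2 = y) s : ℝ) - (N:ℝ) * margSnd p y|)) := by
    intro s hns
    by_contra hcon
    push_neg at hcon
    obtain ⟨h1, h2⟩ := hcon
    apply hns
    have hdivx : |margFst (empFreq s) x - margFst p x|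
        = |(countP (fun w : A × B => w.1 = x) s : ℝ) - (N:ℝ) * margFst p x| / N := by
      rw [margFst_empFreq]
      rw [← abs_of_pos hN0, ← abs_div]
      congr 1
      field_simp
      rw [abs_of_pos hN0]; ring
    have hdivy : |margSnd (empFreq s) y - margSnd p y|
        = |(countP (fun w : A × B => w.2 = y) s : ℝ) - (N:ℝ) * margSnd p y| / N := by
      rw [margSnd_empFreq]
      rw [← abs_of_pos hN0, ← abs_div]
      congr 1
      field_simp
      rw [abs_of_pos hN0]; ring
    have hsqx : Real.sqrt (margFst p x * (L / N))
        = Real.sqrt ((N:ℝ) * margFst p x * L) / N := by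
      rw [show margFst p x * (L / N) = ((N:ℝ) * margFst p x * L) / (N:ℝ) ^ 2 by
        field_simp]
      rw [Real.sqrt_div (by positivity), Real.sqrt_sq hN0.le]
    have hsqy : Real.sqrt (margSnd p y * (L / N))
        = Real.sqrt ((N:ℝ) * margSnd p y * L) / N := by
      rw [show margSnd p y * (L / N) = ((N:ℝ) * margSnd p y * L) / (N:ℝ) ^ 2 by
        field_simp]
      rw [Real.sqrt_div (by positivity), Real.sqrt_sq hN0.le]
    have hfx : |margFst (empFreq s) x - margFst p x|
        ≤ 3 * Real.sqrt (margFst p x * (L / N)) + 3 * (L / N) := by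
      rw [hdivx, hsqx]
      rw [show 3 * (Real.sqrt ((N:ℝ) * margFst p x * L) / N) + 3 * (L / N)
        = (3 * Real.sqrt ((N:ℝ) * margFst p x * L) + 3 * L) / N by ring]
      exact div_le_div_of_nonneg_right h1 hN0.le |>.trans_eq rfl
    have hfy : |margSnd (empFreq s) y - margSnd p y|
        ≤ 3 * Real.sqrt (margSnd p y * (L / N)) + 3 * (L / N) := by
      rw [hdivy, hsqy]
      rw [show 3 * (Real.sqrt ((N:ℝ) * margSnd p y * L) / N) + 3 * (L / N)
        = (3 * Real.sqrt ((N:ℝ) * margSnd p y * L) + 3 * L) / N by ring]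
      exact div_le_div_of_nonneg_right h2 hN0.le |>.trans_eq rfl
    have hdet := det_bound (margFst p x) (margSnd p y)
      (margFst (empFreq s) x) (margSnd (empFreq s) y) (L / N)
      hPx0 hPx1 hPy0 hPy1 hu hfx hfy
    have harg : margFst p x * margSnd p y * L / N
        = margFst p x * margSnd p y * (L / N) := mul_div_assoc _ _ _
    rw [harg]
    exact hdet.trans (le_of_eq (by ring))
  have hbad : iidProb p N (fun s =>
      ¬ (|margFst (empFreq s) x * margSnd (empFreq s) y - margFst p x * margSnd p y| ≤
        6 * Real.sqrt (margFst p x * margSnd p y * L / N) +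
          18 * (margFst p x + margSnd p y) * L / N +
          18 * L ^ 2 / (N : ℝ) ^ 2)) ≤ 2 * δ := by
    refine le_trans (iidProb_mono hp himp) (le_trans (iidProb_union hp) ?_)
    rw [hexp] at htailx htaily
    linarith
  linarith
end
end

section
/- For every α ∈ [0, 1/2], the distributions P1 and P2 satisfy d_H²(P1, P2) ≤ α². -/
open scoped BigOperators

noncomputable section

/-- The distribution `P1` on `{0,1}³` (coordinates `(x,y,z)`):
`P1(x,y,z) = (1/2)·(1/4 + (1/2)·1[x=z])·((1−α)/2 + α·1[y=z])`. -/
noncomputable def P1 (a : ℝ) : Bool × Bool × Bool → ℝ := fun w =>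
  (1 / 2) * (1 / 4 + (1 / 2) * (if w.1 = w.2.2 then (1 : ℝ) else 0)) *
    ((1 - a) / 2 + a * (if w.2.1 = w.2.2 then (1 : ℝ) else 0))

/-- The distribution `P2` on `{0,1}³` (coordinates `(x,y,z)`):
`P2(x,y,z) = (1/4)·((1/2)·1[x=z] + α·1[y=z] + (1/4 − α/2))`. -/
noncomputable def P2 (a : ℝ) : Bool × Bool × Bool → ℝ := fun w =>
  (1 / 4) * ((1 / 2) * (if w.1 = w.2.2 then (1 : ℝ) else 0) +
    a * (if w.2.1 = w.2.2 then (1 : ℝ) else 0) + (1 / 4 - a / 2))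

/-- Squared Hellinger distance between pmfs on a finite set. -/
noncomputable def hellingerSq {α : Type*} [Fintype α] (P Q : α → ℝ) : ℝ :=
  1 - ∑ w, Real.sqrt (P w * Q w)

/-- The squared Hellinger distance between `P1` and `P2` is at most `α²`. -/
theorem hellinger_P1_P2 (a : ℝ) (h0 : 0 ≤ a) (h1 : a ≤ 1 / 2) :
    hellingerSq (P1 a) (P2 a) ≤ a ^ 2 := by
  unfold hellingerSq P1 P2
  simp only [Fintype.sum_prod_type, Fintype.sum_bool]
  norm_num
  have hb1 : (3 + 5*a/2 - a^2/12)/16 ≤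
      Real.sqrt (3 / 8 * ((1 - a) / 2 + a) * (1 / 4 * (1 / 2 + a + (1 / 4 - a / 2)))) := by
    apply (Real.le_sqrt (by nlinarith) (by nlinarith)).mpr
    nlinarith [sq_nonneg a, sq_nonneg (a*a)]
  have hb2 : (3 - 5*a/2 - a^2/2)/16 ≤
      Real.sqrt (3 / 8 * ((1 - a) / 2) * (1 / 4 * (1 / 2 + (1 / 4 - a / 2)))) := by
    apply (Real.le_sqrt (by nlinarith) (by nlinarith)).mpr
    nlinarith [sq_nonneg a, sq_nonneg (a*a)]
  have hb3 : (1 + 3*a/2 - a^2/4)/16 ≤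
      Real.sqrt (1 / 8 * ((1 - a) / 2 + a) * (1 / 4 * (a + (1 / 4 - a / 2)))) := by
    apply (Real.le_sqrt (by nlinarith) (by nlinarith)).mpr
    nlinarith [sq_nonneg a, sq_nonneg (a*a)]
  have hb4 : (1 - 3*a/2 - a^2)/16 ≤
      Real.sqrt (1 / 8 * ((1 - a) / 2) * (1 / 4 * (1 / 4 - a / 2))) := by
    apply (Real.le_sqrt (by nlinarith) (by nlinarith)).mpr
    nlinarith [sq_nonneg a, sq_nonneg (a*a), sq_nonneg (1 - 2*a), sq_nonneg (a*(1-2*a))]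
  nlinarith [sq_nonneg a]
end
end

section
/- For every α ∈ [0, 1/2), the distribution P1 satisfies d_KL(P1 ‖ (P1)_{G1}) = 0, where (P1)_{G1} is the projection of P1 onto the chain X→Z→Y. Moreover, there exist constants c > 0 and α₀ ∈ (0, 1/2) such that for every α ∈ (0, α₀], d_KL(P1 ‖ (P1)_{G2}) ≥ c·α², where (P1)_{G2} is the projection of P1 onto the v-structure X→Z←Y. -/
open scoped BigOperators

noncomputable section

/-- KL divergence between pmfs on a finite set (natural logarithm). -/
noncomputable def klDiv {α : Type*} [Fintype α] (P Q : α → ℝ) : ℝ :=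
  ∑ w, P w * Real.log (P w / Q w)

/-- Projection of a joint pmf of `(X,Y,Z)` onto the chain `X → Z → Y`:
`P_{G1}(x,y,z) = P(x)·P(z∣x)·P(y∣z)`. -/
noncomputable def projChain {A B C : Type*} [Fintype A] [Fintype B] [Fintype C]
    (p : A × B × C → ℝ) : A × B × C → ℝ := fun w =>
  (∑ y, ∑ z, p (w.1, y, z)) *
    ((∑ y, p (w.1, y, w.2.2)) / (∑ y, ∑ z, p (w.1, y, z))) *
    ((∑ x, p (x, w.2.1, w.2.2)) / (∑ x, ∑ y, p (x, y, w.2.2)))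

/-- Projection of a joint pmf of `(X,Y,Z)` onto the v-structure `X → Z ← Y`:
`P_{G2}(x,y,z) = P(x)·P(y)·P(z∣x,y)`. -/
noncomputable def projV {A B C : Type*} [Fintype A] [Fintype B] [Fintype C]
    (p : A × B × C → ℝ) : A × B × C → ℝ := fun w =>
  (∑ y, ∑ z, p (w.1, y, z)) * (∑ x, ∑ z, p (x, w.2.1, z)) *
    (p w / (∑ z, p (w.1, w.2.1, z)))

/-! ### Auxiliary lemmas -/

lemma margZ_P1 (a : ℝ) (x y : Bool) :
    (∑ z, P1 a (x, y, z)) = if x = y then (2 + a) / 8 else (2 - a) / 8 := by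
  cases x <;> cases y <;> simp [P1, Fintype.sum_bool] <;> ring

lemma margX_P1 (a : ℝ) (x : Bool) : (∑ y, ∑ z, P1 a (x, y, z)) = 1 / 2 := by
  cases x <;> simp [P1, Fintype.sum_bool] <;> ring

lemma margY_P1 (a : ℝ) (y : Bool) : (∑ x, ∑ z, P1 a (x, y, z)) = 1 / 2 := by
  cases y <;> simp [P1, Fintype.sum_bool] <;> ring

lemma P1_pos (a : ℝ) (h0 : 0 ≤ a) (h1 : a < 1) (w : Bool × Bool × Bool) : 0 < P1 a w := by
  obtain ⟨x, y, z⟩ := w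
  cases x <;> cases y <;> cases z <;> simp [P1] <;> nlinarith

lemma projChain_P1 (a : ℝ) (w : Bool × Bool × Bool) : projChain (P1 a) w = P1 a w := by
  obtain ⟨x, y, z⟩ := w
  cases x <;> cases y <;> cases z <;>
    simp [projChain, P1, Fintype.sum_bool] <;> ring

lemma ratioV_P1 (a : ℝ) (h0 : 0 < a) (h1 : a < 1) (w : Bool × Bool × Bool) :
    P1 a w / projV (P1 a) w = if w.1 = w.2.1 then (2 + a) / 2 else (2 - a) / 2 := by
  have hP : P1 a w ≠ 0 := ne_of_gt (P1_pos a h0.le h1 w)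
  have key : ∀ p d : ℝ, p ≠ 0 → d ≠ 0 → p / (1 / 2 * (1 / 2) * (p / d)) = 4 * d := by
    intro p d hp hd
    rw [eq_comm, eq_div_iff (by positivity)]
    field_simp; ring
  simp only [projV, margX_P1, margY_P1]
  simp only [margZ_P1]
  rw [key (P1 a w) _ hP (by split_ifs <;> intro h <;> nlinarith)]
  split_ifs <;> ring

lemma klV_P1 (a : ℝ) (h0 : 0 < a) (h1 : a < 1) :
    klDiv (P1 a) (projV (P1 a)) =
      (2 + a) / 4 * Real.log ((2 + a) / 2) + (2 - a) / 4 * Real.log ((2 - a) / 2) := by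
  unfold klDiv
  have h : ∀ w : Bool × Bool × Bool, P1 a w * Real.log (P1 a w / projV (P1 a) w)
      = P1 a w * Real.log (if w.1 = w.2.1 then (2 + a) / 2 else (2 - a) / 2) := by
    intro w; rw [ratioV_P1 a h0 h1 w]
  simp only [h]
  simp only [Fintype.sum_prod_type, Fintype.sum_bool, P1]
  norm_num
  ring

lemma kl_lb_P1 (a : ℝ) (h0 : 0 < a) (h1 : a ≤ 1/4) :
    (1/16) * a ^ 2 ≤
      (2 + a) / 4 * Real.log ((2 + a) / 2) + (2 - a) / 4 * Real.log ((2 - a) / 2) := by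
  have hp : (0:ℝ) < (2 + a) / 2 := by linarith
  have hm : (0:ℝ) < (2 - a) / 2 := by linarith
  set u := Real.log ((2 + a) / 2) with hu
  set v := Real.log ((2 - a) / 2) with hv
  have hsum : u + v = Real.log ((4 - a ^ 2) / 4) := by
    rw [hu, hv, ← Real.log_mul hp.ne' hm.ne']
    congr 1; ring
  have hdiff : u - v = Real.log ((2 + a) / (2 - a)) := by
    rw [hu, hv, ← Real.log_div hp.ne' hm.ne']
    congr 1; field_simp
  have hq : (0:ℝ) < (4 - a ^ 2) / 4 := by nlinarith
  have hr : (0:ℝ) < (2 + a) / (2 - a) := div_pos (by linarith) (by linarith)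
  have hsb : -(16/63) * a ^ 2 ≤ u + v := by
    rw [hsum]
    have := Real.one_sub_inv_le_log_of_pos hq
    have hinv : ((4 - a ^ 2) / 4)⁻¹ = 4 / (4 - a ^ 2) := inv_div _ _
    rw [hinv] at this
    have h4 : (0:ℝ) < 4 - a ^ 2 := by nlinarith
    have hb : 4 / (4 - a ^ 2) ≤ 1 + (16/63) * a ^ 2 := by
      have h16 : a ^ 2 ≤ 1/16 := by nlinarith
      rw [div_le_iff₀ h4]
      nlinarith [mul_nonneg (sq_nonneg a) (by linarith : (0:ℝ) ≤ 1/16 - a ^ 2)]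
    linarith
  have hdb : (8/9) * a ≤ u - v := by
    rw [hdiff]
    have := Real.one_sub_inv_le_log_of_pos hr
    have hinv : ((2 + a) / (2 - a))⁻¹ = (2 - a) / (2 + a) := inv_div _ _
    rw [hinv] at this
    have h2 : (0:ℝ) < 2 + a := by linarith
    have hb : (2 - a) / (2 + a) ≤ 1 - (8/9) * a := by
      rw [div_le_iff₀ h2]; nlinarith
    linarith
  have hE : (2 + a) / 4 * u + (2 - a) / 4 * v = (1/2) * (u + v) + (a/4) * (u - v) := by ring
  have t1 : (a/4) * ((8/9) * a) ≤ (a/4) * (u - v) :=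
    mul_le_mul_of_nonneg_left hdb (by linarith)
  have t2 : (a/4) * ((8/9) * a) = (2/9) * a ^ 2 := by ring
  rw [hE]
  rw [t2] at t1
  linarith [sq_nonneg a]

/-- `d_KL(P1 ‖ (P1)_{G1}) = 0` for the chain `X → Z → Y`, and for all small enough `α > 0`,
`d_KL(P1 ‖ (P1)_{G2}) = Ω(α²)` for the v-structure `X → Z ← Y`. -/
theorem kl_P1_projections :
    (∀ a : ℝ, 0 ≤ a → a < 1 / 2 → klDiv (P1 a) (projChain (P1 a)) = 0) ∧
      ∃ c : ℝ, 0 < c ∧ ∃ a₀ : ℝ, 0 < a₀ ∧ a₀ < 1 / 2 ∧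
        ∀ a : ℝ, 0 < a → a ≤ a₀ → c * a ^ 2 ≤ klDiv (P1 a) (projV (P1 a)) := by
  constructor
  · intro a h0 h1
    unfold klDiv
    apply Finset.sum_eq_zero
    intro w _
    rw [projChain_P1, div_self (ne_of_gt (P1_pos a h0 (by linarith) w)),
      Real.log_one, mul_zero]
  · refine ⟨1/16, by norm_num, 1/4, by norm_num, by norm_num, ?_⟩
    intro a h0 h1
    rw [klV_P1 a h0 (by linarith)]
    exact kl_lb_P1 a h0 h1
end
end

section
/- For every α ∈ [0, 1/2), the distribution P2 satisfies d_KL(P2 ‖ (P2)_{G2}) = 0, where (P2)_{G2} is the projection of P2 onto the v-structure X→Z←Y. Moreover, there exist constants c > 0 and α₀ ∈ (0, 1/2) such that for every α ∈ (0, α₀], d_KL(P2 ‖ (P2)_{G1}) ≥ c·α², where (P2)_{G1} is the projection of P2 onto the chain X→Z→Y. -/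
open scoped BigOperators

noncomputable section

lemma projV_P2 (a : ℝ) : projV (P2 a) = P2 a := by
  funext w
  obtain ⟨x, y, z⟩ := w
  cases x <;> cases y <;> cases z <;>
    (simp [projV, P2, Fintype.sum_bool]; ring_nf)

noncomputable def Q2 (a : ℝ) : Bool × Bool × Bool → ℝ := fun w =>
  (1 / 8) * ((if w.1 = w.2.2 then (1 : ℝ) else 0) + 1 / 2) *
    (1 - a + 2 * a * (if w.2.1 = w.2.2 then (1 : ℝ) else 0))

lemma projChain_P2 (a : ℝ) : projChain (P2 a) = Q2 a := by
  funext w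
  obtain ⟨x, y, z⟩ := w
  cases x <;> cases y <;> cases z <;>
    (simp [projChain, P2, Q2, Fintype.sum_bool]; ring_nf)

lemma key_kl_bound (p q : ℝ) (hp : 0 < p) (hq : 0 < q)
    (h : Real.sqrt p + Real.sqrt q ≤ 1) :
    (p - q) + (p - q) ^ 2 ≤ p * Real.log (p / q) := by
  set s := Real.sqrt p with hs
  set t := Real.sqrt q with ht
  have hs0 : 0 < s := Real.sqrt_pos.mpr hp
  have ht0 : 0 < t := Real.sqrt_pos.mpr hq
  have hps : p = s ^ 2 := (Real.sq_sqrt hp.le).symm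
  have hqt : q = t ^ 2 := (Real.sq_sqrt hq.le).symm
  have hlog : Real.log (t / s) ≤ t / s - 1 := Real.log_le_sub_one_of_pos (by positivity)
  have hlog' : s * Real.log (t / s) ≤ t - s := by
    have := mul_le_mul_of_nonneg_left hlog hs0.le
    have e : s * (t / s - 1) = t - s := by field_simp
    linarith [e ▸ this]
  have hlog2 : Real.log (p / q) = -2 * Real.log (t / s) := by
    rw [Real.log_div ht0.ne' hs0.ne', Real.log_div hp.ne' hq.ne', hps, hqt,
      Real.log_pow, Real.log_pow]
    push_cast; ring
  have h1 : 2 * s ^ 2 - 2 * s * t ≤ p * Real.log (p / q) := by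
    rw [hlog2, hps]
    nlinarith [hlog', hs0]
  have hst : (s + t) ^ 2 ≤ 1 := by nlinarith [hs0.le, ht0.le]
  have h2 : (p - q) ^ 2 ≤ (s - t) ^ 2 := by
    calc (p - q) ^ 2 = (s - t) ^ 2 * (s + t) ^ 2 := by rw [hps, hqt]; ring
      _ ≤ (s - t) ^ 2 * 1 := mul_le_mul_of_nonneg_left hst (sq_nonneg _)
      _ = (s - t) ^ 2 := mul_one _
  nlinarith [h1, h2]

lemma sqrt_le_half' {x : ℝ} (h2 : x ≤ 1 / 4) : Real.sqrt x ≤ 1 / 2 := by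
  have := Real.sqrt_le_sqrt h2
  rwa [show Real.sqrt (1/4) = 1/2 by
    rw [show (1:ℝ)/4 = (1/2)^2 by norm_num, Real.sqrt_sq]; norm_num] at this

/-- `d_KL(P2 ‖ (P2)_{G2}) = 0` for the v-structure `X → Z ← Y`, and for all small enough
`α > 0`, `d_KL(P2 ‖ (P2)_{G1}) = Ω(α²)` for the chain `X → Z → Y`. -/
theorem kl_P2_projections :
    (∀ a : ℝ, 0 ≤ a → a < 1 / 2 → klDiv (P2 a) (projV (P2 a)) = 0) ∧
      ∃ c : ℝ, 0 < c ∧ ∃ a₀ : ℝ, 0 < a₀ ∧ a₀ < 1 / 2 ∧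
        ∀ a : ℝ, 0 < a → a ≤ a₀ → c * a ^ 2 ≤ klDiv (P2 a) (projChain (P2 a)) := by

  constructor
  · intro a _ _
    rw [projV_P2, klDiv]
    apply Finset.sum_eq_zero
    intro w _
    rcases eq_or_ne (P2 a w) 0 with h | h
    · rw [h]; ring
    · rw [div_self h, Real.log_one, mul_zero]
  · refine ⟨1/32, by norm_num, 1/8, by norm_num, by norm_num, ?_⟩
    intro a ha ha8
    rw [projChain_P2, klDiv]
    have hbound : ∀ w, (P2 a w - Q2 a w) + (P2 a w - Q2 a w) ^ 2
        ≤ P2 a w * Real.log (P2 a w / Q2 a w) := by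
      intro w
      obtain ⟨x, y, z⟩ := w
      have hP : 0 < P2 a (x,y,z) ∧ P2 a (x,y,z) ≤ 1/4 := by
        cases x <;> cases y <;> cases z <;>
          (constructor <;> (simp [P2]; nlinarith))
      have hQ : 0 < Q2 a (x,y,z) ∧ Q2 a (x,y,z) ≤ 1/4 := by
        cases x <;> cases y <;> cases z <;>
          (constructor <;> (simp [Q2]; nlinarith))
      refine key_kl_bound _ _ hP.1 hQ.1 ?_
      have := sqrt_le_half' hP.2
      have := sqrt_le_half' hQ.2
      linarith
    calc (1:ℝ)/32 * a ^ 2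
        = ∑ w, ((P2 a w - Q2 a w) + (P2 a w - Q2 a w) ^ 2) := by
          simp [Fintype.sum_prod_type, Fintype.sum_bool, P2, Q2]; ring
      _ ≤ ∑ w, P2 a w * Real.log (P2 a w / Q2 a w) :=
          Finset.sum_le_sum fun w _ => hbound w
end
end

section
/- For all real numbers a and b with b > 0 and a ≥ −b, (1/3)·min(a²/b, |a|·log(2 + |a|/b)) ≤ (a+b)·log((a+b)/b) − a ≤ min(a²/b, |a|·log(2 + |a|/b)). -/
open Real

lemma my_sinh_le_mul_cosh {u : ℝ} (hu : 0 ≤ u) : sinh u ≤ u * cosh u := by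
  have key : ∀ x : ℝ, HasDerivAt (fun x => x * Real.cosh x - Real.sinh x) (x * Real.sinh x) x := by
    intro x
    have h1 := Real.hasDerivAt_cosh x
    have h2 := Real.hasDerivAt_sinh x
    have h3 := ((hasDerivAt_id x).mul h1).sub h2
    refine h3.congr_deriv ?_
    simp only [id_eq]; ring
  have mono : MonotoneOn (fun x => x * Real.cosh x - Real.sinh x) (Set.Ici 0) := by
    apply monotoneOn_of_deriv_nonneg (convex_Ici 0)
    · exact Continuous.continuousOn (by continuity)
    · intro x _
      exact (key x).differentiableAt.differentiableWithinAt
    · intro x hx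
      rw [(key x).deriv]
      rw [interior_Ici] at hx
      have hx' : (0:ℝ) ≤ x := le_of_lt hx
      exact mul_nonneg hx' (Real.sinh_nonneg_iff.2 hx')
  have h := mono Set.self_mem_Ici (Set.mem_Ici.2 hu) hu
  simp at h
  linarith

lemma my_log_ge_rat {x : ℝ} (hx : 1 ≤ x) : (x^2-1)/(x^2+1) ≤ log x := by
  have hx0 : 0 < x := lt_of_lt_of_le one_pos hx
  have hl : 0 ≤ log x := log_nonneg hx
  have h := my_sinh_le_mul_cosh hl
  rw [Real.sinh_log hx0, Real.cosh_log hx0] at h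
  rw [div_le_iff₀ (by positivity)]
  have hinv : x * x⁻¹ = 1 := mul_inv_cancel₀ (ne_of_gt hx0)
  nlinarith [mul_le_mul_of_nonneg_right h hx0.le]

lemma my_log_ge_pade {x : ℝ} (hx : 1 ≤ x) : 2*(x-1)/(x+1) ≤ log x := by
  have hx0 : 0 < x := lt_of_lt_of_le one_pos hx
  have hy : 1 ≤ Real.sqrt x := by
    rw [show (1:ℝ) = Real.sqrt 1 by simp]
    exact Real.sqrt_le_sqrt hx
  have hy2 : (Real.sqrt x)^2 = x := Real.sq_sqrt hx0.le
  have h := my_log_ge_rat hy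
  rw [hy2, Real.log_sqrt hx0.le] at h
  have : 2*(x-1)/(x+1) = 2*((x-1)/(x+1)) := by ring
  rw [this]
  linarith

lemma my_log_le_rat {x : ℝ} (hx : 1 ≤ x) : log x ≤ (x^2-1)/(2*x) := by
  have hx0 : 0 < x := lt_of_lt_of_le one_pos hx
  have hl : 0 ≤ log x := log_nonneg hx
  have h := Real.self_le_sinh_iff.2 hl
  rw [Real.sinh_log hx0] at h
  rw [le_div_iff₀ (by positivity)]
  have hinv : x * x⁻¹ = 1 := mul_inv_cancel₀ (ne_of_gt hx0)
  nlinarith [mul_le_mul_of_nonneg_right h hx0.le]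

lemma my_log_ge_rat' {x : ℝ} (hx0 : 0 < x) (hx : x ≤ 1) : (x^2-1)/(2*x) ≤ log x := by
  have hl : log x ≤ 0 := log_nonpos hx0.le hx
  have h := Real.sinh_le_self_iff.2 hl
  rw [Real.sinh_log hx0] at h
  rw [div_le_iff₀ (by positivity)]
  have hinv : x * x⁻¹ = 1 := mul_inv_cancel₀ (ne_of_gt hx0)
  nlinarith [mul_le_mul_of_nonneg_right h hx0.le]

lemma my_le_log_two_add {s : ℝ} (hs0 : 0 ≤ s) (hs1 : s ≤ 1) : s ≤ log (2 + s) := by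
  have he : Real.exp s ≤ 2 + s := by
    have hc := convexOn_exp.2 (Set.mem_univ (0:ℝ)) (Set.mem_univ (1:ℝ))
      (by linarith : (0:ℝ) ≤ 1 - s) hs0 (by ring)
    simp only [smul_eq_mul, mul_zero, mul_one, zero_add, Real.exp_zero] at hc
    have := Real.exp_one_lt_d9
    nlinarith
  calc s = log (Real.exp s) := (Real.log_exp s).symm
    _ ≤ log (2 + s) := Real.log_le_log (Real.exp_pos s) he



-- upper bound, square
lemma my_upper_sq {t : ℝ} (ht : -1 ≤ t) : (1+t) * log (1+t) - t ≤ t^2 := by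
  rcases eq_or_lt_of_le ht with h | h
  · rw [← h]; norm_num
  · have hx : (0:ℝ) < 1 + t := by linarith
    have hl : log (1+t) ≤ t := by
      have := Real.log_le_sub_one_of_pos hx
      linarith
    nlinarith [mul_le_mul_of_nonneg_left hl hx.le]

-- upper bound, abs log
lemma my_upper_abs {t : ℝ} (ht : -1 ≤ t) :
    (1+t) * log (1+t) - t ≤ |t| * log (2 + |t|) := by
  rcases le_or_gt 0 t with h | h
  · rw [abs_of_nonneg h]
    have hx : (0:ℝ) < 1 + t := by linarith
    have hl : log (1+t) ≤ t := by
      have := Real.log_le_sub_one_of_pos hx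
      linarith
    have hm : log (1+t) ≤ log (2+t) := Real.log_le_log hx (by linarith)
    nlinarith [mul_le_mul_of_nonneg_left hm h]
  · rw [abs_of_neg h]
    set s := -t with hs
    have hs0 : 0 < s := by simp [hs]; linarith
    have hs1 : s ≤ 1 := by simp [hs]; linarith
    have hkey : (1+t) * log (1+t) - t ≤ s^2 := by
      rcases eq_or_lt_of_le hs1 with h1 | h1
      · have : t = -1 := by simp [hs] at h1; linarith
        rw [h1, this]; norm_num
      · have hx : (0:ℝ) < 1 + t := by simp [hs] at h1 ⊢; linarith
        have hl : log (1+t) ≤ t := by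
          have := Real.log_le_sub_one_of_pos hx
          linarith
        nlinarith [mul_le_mul_of_nonneg_left hl hx.le]
    have hD := my_le_log_two_add hs0.le hs1
    nlinarith [mul_le_mul_of_nonneg_left hD hs0.le]



lemma my_lower {t : ℝ} (ht : -1 ≤ t) :
    (1/3) * min (t^2) (|t| * log (2 + |t|)) ≤ (1+t) * log (1+t) - t := by
  rcases le_or_gt t 0 with h | h
  · -- t ∈ [-1,0] : g ≥ t²/2
    have hg : t^2/2 ≤ (1+t) * log (1+t) - t := by
      rcases eq_or_lt_of_le ht with h1 | h1
      · rw [← h1]; norm_num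
      · have hx0 : (0:ℝ) < 1 + t := by linarith
        have hx1 : 1 + t ≤ 1 := by linarith
        have hl := my_log_ge_rat' hx0 hx1
        rw [div_le_iff₀ (by positivity)] at hl
        nlinarith
    have hmin : min (t^2) (|t| * log (2 + |t|)) ≤ t^2 := min_le_left _ _
    nlinarith [sq_nonneg t]
  · rcases le_or_gt t 1 with h1 | h1
    · -- t ∈ (0,1] : g ≥ t²/(2+t) ≥ t²/3
      have hl := my_log_ge_pade (by linarith : (1:ℝ) ≤ 1 + t)
      have h2 : 2*(1+t-1)/(1+t+1) = 2*t/(2+t) := by ring_nf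
      rw [h2] at hl
      have hg : t^2/3 ≤ (1+t) * log (1+t) - t := by
        have h3 : (0:ℝ) < 2 + t := by linarith
        have h4 : 2*t/(2+t) * (1+t) ≤ log (1+t) * (1+t) :=
          mul_le_mul_of_nonneg_right hl (by linarith)
        have h5 : 2*t/(2+t) * (1+t) = (2*t*(1+t))/(2+t) := by ring
        rw [h5, div_le_iff₀ h3] at h4
        nlinarith
      have hmin : min (t^2) (|t| * log (2 + |t|)) ≤ t^2 := min_le_left _ _
      linarith
    · -- t ≥ 1 : show t * log(2+t) ≤ 3 * g
      have habs : |t| = t := abs_of_pos (by linarith)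
      have hmin : min (t^2) (|t| * log (2 + |t|)) ≤ t * log (2+t) := by
        rw [habs]; exact min_le_right _ _
      have hkey : t * log (2+t) ≤ 3 * ((1+t) * log (1+t) - t) := by
        rcases le_or_gt t (6/5) with h2 | h2
        · -- t ∈ [1, 6/5]
          have hL1 : Real.log 2 + 10*(t-1)/21 ≤ log (1+t) := by
            have e1 : log (1+t) = Real.log 2 + log ((1+t)/2) := by
              rw [← Real.log_mul (by norm_num) (by positivity)]
              congr 1; ring
            have h3 : (1:ℝ) ≤ (1+t)/2 := by linarith
            have h4 := my_log_ge_pade h3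
            have h5 : 2*((1+t)/2-1)/((1+t)/2+1) = 2*(t-1)/(t+3) := by
              field_simp; ring
            rw [h5] at h4
            have h6 : 10*(t-1)/21 ≤ 2*(t-1)/(t+3) := by
              rw [div_le_div_iff₀ (by norm_num) (by linarith)]
              nlinarith
            linarith
          have hL2 : log (2+t) ≤ Real.log 3 + (t-1)/3 := by
            have e1 : log (2+t) = Real.log 3 + log ((2+t)/3) := by
              rw [← Real.log_mul (by norm_num) (by positivity)]
              congr 1; ring
            have h4 := Real.log_le_sub_one_of_pos (by positivity : (0:ℝ) < (2+t)/3)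
            linarith
          have hlog2 : (0.6931471803:ℝ) < Real.log 2 := Real.log_two_gt_d9
          have hlog3 : Real.log 3 ≤ 1.10982 := by
            have e1 : Real.log 3 = Real.log 2 + Real.log (3/2) := by
              rw [← Real.log_mul (by norm_num) (by norm_num)]
              norm_num
            have h4 := my_log_le_rat (by norm_num : (1:ℝ) ≤ 3/2)
            have h5 := Real.log_two_lt_d9
            norm_num at h4
            linarith
          nlinarith [mul_le_mul_of_nonneg_right hL1 (by linarith : (0:ℝ) ≤ 1 + t),
            mul_le_mul_of_nonneg_left hL2 (by linarith : (0:ℝ) ≤ t)]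
        · -- t ≥ 6/5
          have hl := my_log_ge_pade (by linarith : (1:ℝ) ≤ 1 + t)
          have h5 : 2*(1+t-1)/(1+t+1) = 2*t/(2+t) := by ring_nf
          rw [h5] at hl
          -- g ≥ (t/2) log(1+t)
          have hg2 : (t/2) * log (1+t) ≤ (1+t) * log (1+t) - t := by
            have h4 : 2*t/(2+t) * (1 + t/2) ≤ log (1+t) * (1 + t/2) :=
              mul_le_mul_of_nonneg_right hl (by linarith)
            have h6 : 2*t/(2+t) * (1 + t/2) = t := by
              rw [div_mul_eq_mul_div, div_eq_iff (by linarith : (2:ℝ)+t ≠ 0)]; ring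
            rw [h6] at h4
            nlinarith
          -- 3 log(1+t) ≥ 2 log(2+t)
          have hpow : (2+t)^2 ≤ (1+t)^3 := by nlinarith
          have h7 : 2 * log (2+t) ≤ 3 * log (1+t) := by
            have := Real.log_le_log (by positivity : (0:ℝ) < (2+t)^2) hpow
            rw [Real.log_pow, Real.log_pow] at this
            push_cast at this
            linarith
          nlinarith [mul_le_mul_of_nonneg_left h7 (by linarith : (0:ℝ) ≤ t/2)]
      linarith


/-- For `b > 0` and `a ≥ −b`,
`(1/3)·min(a²/b, |a|·log(2 + |a|/b)) ≤ (a+b)·log((a+b)/b) − a ≤ min(a²/b, |a|·log(2 + |a|/b))`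
(natural logarithm; the convention `0·log 0 = 0` holds since `Real.log 0 = 0`). -/
theorem f_two_sided_bounds (a b : ℝ) (hb : 0 < b) (hab : -b ≤ a) :
    (1 / 3) * min (a ^ 2 / b) (|a| * Real.log (2 + |a| / b)) ≤
        (a + b) * Real.log ((a + b) / b) - a ∧
      (a + b) * Real.log ((a + b) / b) - a ≤
        min (a ^ 2 / b) (|a| * Real.log (2 + |a| / b)) := by
  have hbne : b ≠ 0 := ne_of_gt hb
  obtain ⟨t, rfl⟩ : ∃ t, a = t * b := ⟨a / b, (div_mul_cancel₀ a hbne).symm⟩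
  have ht : -1 ≤ t := by
    by_contra hc
    push_neg at hc
    nlinarith
  have e1 : (t * b + b) / b = 1 + t := by field_simp; ring
  have e2 : (t * b) ^ 2 / b = t ^ 2 * b := by field_simp
  have e3 : |t * b| = |t| * b := by rw [abs_mul, abs_of_pos hb]
  have e4 : |t * b| / b = |t| := by rw [e3, mul_div_assoc, div_self hbne, mul_one]
  have emin : min ((t * b) ^ 2 / b) (|t * b| * Real.log (2 + |t * b| / b)) =
      min (t ^ 2) (|t| * Real.log (2 + |t|)) * b := by
    rw [e2, e4, e3]
    rcases le_total (t^2) (|t| * Real.log (2 + |t|)) with h | h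
    · rw [min_eq_left h, min_eq_left]
      calc t^2 * b ≤ (|t| * Real.log (2+|t|)) * b := mul_le_mul_of_nonneg_right h hb.le
        _ = |t| * b * Real.log (2+|t|) := by ring
    · rw [min_eq_right h, min_eq_right, mul_assoc, mul_comm b, ← mul_assoc]
      calc |t| * b * Real.log (2+|t|) = (|t| * Real.log (2+|t|)) * b := by ring
        _ ≤ t^2 * b := mul_le_mul_of_nonneg_right h hb.le
  have efg : (t * b + b) * Real.log ((t * b + b) / b) - t * b
      = ((1+t) * log (1+t) - t) * b := by
    rw [e1]; ring
  rw [emin, efg]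
  constructor
  · have h := mul_le_mul_of_nonneg_right (my_lower ht) hb.le
    calc 1 / 3 * (min (t ^ 2) (|t| * Real.log (2 + |t|)) * b)
        = 1/3 * min (t ^ 2) (|t| * Real.log (2 + |t|)) * b := by ring
      _ ≤ ((1+t) * log (1+t) - t) * b := h
  · exact mul_le_mul_of_nonneg_right
      (le_min (my_upper_sq ht) (my_upper_abs ht)) hb.le
end
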